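/- arXiv:2012.04837 — 6 statements merged into one kernel-verified Lean document; each statement's English description precedes it below -/
import Mathlib

section
/- For finite types X and Z, let p_n and p_a be joint probability mass functions on X × Z such that p_a(x,z) > 0 whenever p_n(x,z) > 0, and such that p_n_Z(z) > 0 for relevant z (so all logarithms are defined). Then KL[p_n ‖ p_a] = I_{p_n}(X;Z) − H(p_n_Z) + Σ_x p_n_X(x) · H(p_n(·|x), p_a(·|x)) + KL[p_n_X ‖ p_a_X], i.e., the joint KL divergence equals the mutual information of p_n, minus the entropy of the latent marginal of p_n, plus the expected cross entropy between the conditionals of p_n and p_a, plus the KL divergence between the marginals on X. -/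
open Finset Real MeasureTheory

noncomputable section

/-- A probability mass function on a finite type. -/
def IsPmf {Ω : Type*} [Fintype Ω] (p : Ω → ℝ) : Prop :=
  (∀ ω, 0 ≤ p ω) ∧ ∑ ω, p ω = 1

/-- KL divergence between pmfs on a finite type.
(The convention `0 · log (0 / q ω) = 0` holds automatically since `Real.log 0 = 0`.) -/
def KL {Ω : Type*} [Fintype Ω] (p q : Ω → ℝ) : ℝ :=
  ∑ ω, p ω * Real.log (p ω / q ω)

/-- Marginal on the first component of a joint pmf. -/
def margX {X Z : Type*} [Fintype X] [Fintype Z] (p : X × Z → ℝ) (x : X) : ℝ :=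
  ∑ z, p (x, z)

/-- Marginal on the second component of a joint pmf. -/
def margZ {X Z : Type*} [Fintype X] [Fintype Z] (p : X × Z → ℝ) (z : Z) : ℝ :=
  ∑ x, p (x, z)

/-- Conditional pmf of `z` given `x`. -/
def condZ {X Z : Type*} [Fintype X] [Fintype Z] (p : X × Z → ℝ) (x : X) (z : Z) : ℝ :=
  p (x, z) / margX p x

/-- Conditional pmf of `x` given `z`. -/
def condX {X Z : Type*} [Fintype X] [Fintype Z] (p : X × Z → ℝ) (z : Z) (x : X) : ℝ :=
  p (x, z) / margZ p z

/-- Shannon entropy of a pmf on a finite type. -/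
def entropy {Ω : Type*} [Fintype Ω] (p : Ω → ℝ) : ℝ :=
  -∑ ω, p ω * Real.log (p ω)

/-- Cross entropy between two pmfs on a finite type. -/
def crossEnt {Ω : Type*} [Fintype Ω] (p q : Ω → ℝ) : ℝ :=
  -∑ ω, p ω * Real.log (q ω)

/-- Mutual information of a joint pmf on `X × Z`. -/
def mutualInfo {X Z : Type*} [Fintype X] [Fintype Z] (p : X × Z → ℝ) : ℝ :=
  KL p (fun xz => margX p xz.1 * margZ p xz.2)

/-- Decomposition of the joint KL divergence into mutual information, entropy of the
latent marginal, expected conditional cross entropy, and the KL divergence of the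
marginals on `X`. -/
theorem kl_joint_decomposition {X Z : Type*} [Fintype X] [Fintype Z]
    (pn pa : X × Z → ℝ) (hpn : IsPmf pn) (hpa : IsPmf pa)
    (hpos : ∀ x z, 0 < pn (x, z) → 0 < pa (x, z))
    (hZ : ∀ x z, 0 < pn (x, z) → 0 < margZ pn z) :
    KL pn pa =
      mutualInfo pn - entropy (margZ pn) +
        (∑ x ∈ Finset.univ.filter (fun x => 0 < margX pn x),
          margX pn x * crossEnt (condZ pn x) (condZ pa x)) +
        KL (margX pn) (margX pa) := by
  obtain ⟨hn0, hn1⟩ := hpn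
  obtain ⟨ha0, _⟩ := hpa
  have hmXnn : ∀ x, 0 ≤ margX pn x := fun x => Finset.sum_nonneg fun z _ => hn0 _
  have hzero : ∀ x, ¬ (0 < margX pn x) → ∀ z, pn (x, z) = 0 := by
    intro x h z
    have h0 : margX pn x = 0 := le_antisymm (not_lt.1 h) (hmXnn x)
    exact (Finset.sum_eq_zero_iff_of_nonneg (fun z _ => hn0 (x, z))).1 h0 z (Finset.mem_univ z)
  have hB : entropy (margZ pn) = -∑ x, ∑ z, pn (x, z) * Real.log (margZ pn z) := by
    rw [entropy, Finset.sum_comm, neg_inj]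
    refine Finset.sum_congr rfl fun z _ => ?_
    rw [margZ, Finset.sum_mul]
  have hC : (∑ x ∈ Finset.univ.filter (fun x => 0 < margX pn x),
        margX pn x * crossEnt (condZ pn x) (condZ pa x)) =
      ∑ x, ∑ z, pn (x, z) * (-Real.log (condZ pa x z)) := by
    rw [Finset.sum_filter]
    refine Finset.sum_congr rfl fun x _ => ?_
    by_cases h : 0 < margX pn x
    · rw [if_pos h, crossEnt, mul_neg, Finset.mul_sum, ← Finset.sum_neg_distrib]
      refine Finset.sum_congr rfl fun z _ => ?_
      have : margX pn x * (condZ pn x z * Real.log (condZ pa x z)) =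
          pn (x, z) * Real.log (condZ pa x z) := by
        rw [condZ]; field_simp
      rw [this, mul_neg]
    · rw [if_neg h]
      exact (Finset.sum_eq_zero fun z _ => by rw [hzero x h z, zero_mul]).symm
  have hD : KL (margX pn) (margX pa) =
      ∑ x, ∑ z, pn (x, z) * Real.log (margX pn x / margX pa x) := by
    rw [KL]
    refine Finset.sum_congr rfl fun x _ => ?_
    rw [margX, Finset.sum_mul]
  rw [hB, hC, hD, mutualInfo, KL, KL, Fintype.sum_prod_type, Fintype.sum_prod_type,
    sub_neg_eq_add, ← Finset.sum_add_distrib, ← Finset.sum_add_distrib,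
    ← Finset.sum_add_distrib]
  refine Finset.sum_congr rfl fun x _ => ?_
  rw [← Finset.sum_add_distrib, ← Finset.sum_add_distrib, ← Finset.sum_add_distrib]
  refine Finset.sum_congr rfl fun z _ => ?_
  by_cases hp : pn (x, z) = 0
  · simp [hp]
  have hpnpos : 0 < pn (x, z) := (hn0 _).lt_of_ne (Ne.symm hp)
  have hpapos : 0 < pa (x, z) := hpos x z hpnpos
  have hmZ : 0 < margZ pn z := hZ x z hpnpos
  have hmXn : 0 < margX pn x :=
    lt_of_lt_of_le hpnpos (Finset.single_le_sum (fun z _ => hn0 (x, z)) (Finset.mem_univ z))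
  have hmXa : 0 < margX pa x :=
    lt_of_lt_of_le hpapos (Finset.single_le_sum (fun z _ => ha0 (x, z)) (Finset.mem_univ z))
  rw [condZ, Real.log_div hp hpapos.ne', Real.log_div hp (mul_pos hmXn hmZ).ne',
    Real.log_mul hmXn.ne' hmZ.ne', Real.log_div hpapos.ne' hmXa.ne',
    Real.log_div hmXn.ne' hmXa.ne']
  ring
end
end

section
/- For finite types X and Z, let p_n and p_a be joint probability mass functions on X × Z such that p_a(x,z) > 0 whenever p_n(x,z) > 0, and p_n_Z(z) > 0 for relevant z. Then the joint KL divergence is bounded below by the mutual information minus the entropy of the latent marginal: KL[p_n ‖ p_a] ≥ I_{p_n}(X;Z) − H(p_n_Z). -/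
open Finset Real MeasureTheory

noncomputable section

/-- The joint KL divergence is bounded below by the mutual information minus the
entropy of the latent marginal: `KL[p_n ‖ p_a] ≥ I(X;Z) − H(p_nZ)`. -/
theorem kl_ge_mutualInfo_sub_entropy {X Z : Type*} [Fintype X] [Fintype Z]
    (pn pa : X × Z → ℝ) (hpn : IsPmf pn) (hpa : IsPmf pa)
    (hpos : ∀ x z, 0 < pn (x, z) → 0 < pa (x, z))
    (hZ : ∀ x z, 0 < pn (x, z) → 0 < margZ pn z) :
    KL pn pa ≥ mutualInfo pn - entropy (margZ pn) := by
  obtain ⟨hnn, hsum⟩ := hpn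
  obtain ⟨hann, hasum⟩ := hpa
  -- Step 1: KL pn pa ≥ 0 (Gibbs)
  have hKL : 0 ≤ KL pn pa := by
    have h1 : ∀ ω : X × Z, pn ω - pa ω ≤ pn ω * Real.log (pn ω / pa ω) := by
      intro ω
      rcases eq_or_lt_of_le (hnn ω) with h0 | h0
      · simp only [← h0, zero_mul, zero_sub, neg_nonpos]
        exact hann ω
      · have hpaω : 0 < pa ω := hpos ω.1 ω.2 (by simpa using h0)
        have hlog : Real.log (pa ω / pn ω) ≤ pa ω / pn ω - 1 :=
          Real.log_le_sub_one_of_pos (div_pos hpaω h0)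
        have heq : Real.log (pn ω / pa ω) = -Real.log (pa ω / pn ω) := by
          rw [Real.log_div (ne_of_gt h0) (ne_of_gt hpaω),
              Real.log_div (ne_of_gt hpaω) (ne_of_gt h0)]
          ring
        rw [heq]
        have := mul_le_mul_of_nonneg_left hlog (le_of_lt h0)
        have h2 : pn ω * (pa ω / pn ω - 1) = pa ω - pn ω := by
          field_simp
        nlinarith
    calc (0 : ℝ) = ∑ ω : X × Z, (pn ω - pa ω) := by
            rw [Finset.sum_sub_distrib, hsum, hasum]; ring
      _ ≤ KL pn pa := Finset.sum_le_sum (fun ω _ => h1 ω)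
  -- Step 2: mutualInfo pn - entropy (margZ pn) ≤ 0
  have hMI : mutualInfo pn - entropy (margZ pn) ≤ 0 := by
    have hrw : mutualInfo pn - entropy (margZ pn) =
        ∑ ω : X × Z, pn ω * (Real.log (pn ω / (margX pn ω.1 * margZ pn ω.2))
          + Real.log (margZ pn ω.2)) := by
      have hent : ∑ z, margZ pn z * Real.log (margZ pn z) =
          ∑ ω : X × Z, pn ω * Real.log (margZ pn ω.2) := by
        rw [Fintype.sum_prod_type, Finset.sum_comm]
        refine Finset.sum_congr rfl (fun z _ => ?_)
        simp only [margZ, Finset.sum_mul]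
      simp only [mutualInfo, KL, entropy, sub_neg_eq_add, hent,
        mul_add, ← Finset.sum_add_distrib]
    rw [hrw]
    apply Finset.sum_nonpos
    intro ω _
    rcases eq_or_lt_of_le (hnn ω) with h0 | h0
    · simp [← h0]
    · obtain ⟨x, z⟩ := ω
      have hpnω : 0 < pn (x, z) := h0
      have hZpos : 0 < margZ pn z := hZ x z hpnω
      have hXge : pn (x, z) ≤ margX pn x := by
        rw [margX]
        exact Finset.single_le_sum (fun i _ => hnn (x, i)) (Finset.mem_univ z)
      have hXpos : 0 < margX pn x := lt_of_lt_of_le hpnω hXge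
      have hlog : Real.log (pn (x, z) / (margX pn x * margZ pn z))
          + Real.log (margZ pn z) = Real.log (pn (x, z) / margX pn x) := by
        rw [Real.log_div (ne_of_gt hpnω) (ne_of_gt (mul_pos hXpos hZpos)),
            Real.log_mul (ne_of_gt hXpos) (ne_of_gt hZpos),
            Real.log_div (ne_of_gt hpnω) (ne_of_gt hXpos)]
        ring
      rw [hlog]
      apply mul_nonpos_of_nonneg_of_nonpos (le_of_lt hpnω)
      apply Real.log_nonpos
      · positivity
      · exact div_le_one_of_le₀ hXge (le_of_lt hXpos)
  linarith
end
end

section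
/- For finite types X and Z, let p_n and p_a be joint probability mass functions on X × Z such that p_a(x,z) > 0 whenever p_n(x,z) > 0, and assume p_a(z|x) ≤ p_n_Z(z) for every pair (x,z) with p_n(x,z) > 0. Then for every real β with 0 ≤ β ≤ 1, the joint KL divergence satisfies KL[p_n ‖ p_a] ≥ I_{p_n}(X;Z) − β · H(p_n_Z). -/
open Finset Real MeasureTheory

noncomputable section

/-- Under the separability assumption `p_a(z|x) ≤ p_nZ(z)` on the support of `p_n`,
for every `β ∈ [0,1]` the joint KL divergence satisfies
`KL[p_n ‖ p_a] ≥ I(X;Z) − β · H(p_nZ)`. -/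
theorem kl_ge_mutualInfo_sub_beta_entropy {X Z : Type*} [Fintype X] [Fintype Z]
    (pn pa : X × Z → ℝ) (hpn : IsPmf pn) (hpa : IsPmf pa)
    (hpos : ∀ x z, 0 < pn (x, z) → 0 < pa (x, z))
    (hle : ∀ x z, 0 < pn (x, z) → condZ pa x z ≤ margZ pn z)
    (β : ℝ) (hβ0 : 0 ≤ β) (hβ1 : β ≤ 1) :
    KL pn pa ≥ mutualInfo pn - β * entropy (margZ pn) := by
  obtain ⟨hpn0, hpn1⟩ := hpn
  obtain ⟨hpa0, hpa1⟩ := hpa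
  have hmXpn : ∀ x z, pn (x, z) ≤ margX pn x := fun x z =>
    Finset.single_le_sum (fun i _ => hpn0 (x, i)) (mem_univ z)
  have hmZpn : ∀ x z, pn (x, z) ≤ margZ pn z := fun x z =>
    Finset.single_le_sum (fun i _ => hpn0 (i, z)) (mem_univ x)
  have hmXpa : ∀ x z, pa (x, z) ≤ margX pa x := fun x z =>
    Finset.single_le_sum (fun i _ => hpa0 (x, i)) (mem_univ z)
  have hpn1' : ∑ x, ∑ z, pn (x, z) = 1 := by
    rw [← Fintype.sum_prod_type]; exact hpn1
  have hpa1' : ∑ x, ∑ z, pa (x, z) = 1 := by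
    rw [← Fintype.sum_prod_type]; exact hpa1
  have hmargXpn1 : ∑ x, margX pn x = 1 := hpn1'
  have hmargXpa1 : ∑ x, margX pa x = 1 := hpa1'
  have hmargZpn0 : ∀ z, 0 ≤ margZ pn z := fun z =>
    Finset.sum_nonneg fun x _ => hpn0 (x, z)
  have hmargXpn0 : ∀ x, 0 ≤ margX pn x := fun x =>
    Finset.sum_nonneg fun z _ => hpn0 (x, z)
  have hmargXpa0 : ∀ x, 0 ≤ margX pa x := fun x =>
    Finset.sum_nonneg fun z _ => hpa0 (x, z)
  have hmargZpn1 : ∑ z, margZ pn z = 1 := by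
    unfold margZ; rw [Finset.sum_comm]; exact hpn1'
  -- entropy of margZ pn is nonnegative
  have hH : 0 ≤ entropy (margZ pn) := by
    unfold entropy
    rw [neg_nonneg]
    apply Finset.sum_nonpos
    intro z _
    have h1 : margZ pn z ≤ 1 := by
      calc margZ pn z ≤ ∑ z', margZ pn z' :=
            Finset.single_le_sum (fun i _ => hmargZpn0 i) (mem_univ z)
        _ = 1 := hmargZpn1
    have hlog : Real.log (margZ pn z) ≤ 0 := Real.log_nonpos (hmargZpn0 z) h1
    exact mul_nonpos_iff.mpr (Or.inl ⟨hmargZpn0 z, hlog⟩)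
  -- key termwise inequality
  have key : ∀ ω : X × Z,
      pn ω * (Real.log (margX pn ω.1) - Real.log (margX pa ω.1)) ≤
        pn ω * Real.log (pn ω / pa ω) -
          pn ω * Real.log (pn ω / (margX pn ω.1 * margZ pn ω.2)) := by
    rintro ⟨x, z⟩
    by_cases h : 0 < pn (x, z)
    · have hpa' := hpos x z h
      have hmX : 0 < margX pn x := lt_of_lt_of_le h (hmXpn x z)
      have hmZ : 0 < margZ pn z := lt_of_lt_of_le h (hmZpn x z)
      have hmXa : 0 < margX pa x := lt_of_lt_of_le hpa' (hmXpa x z)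
      have hcond : 0 < condZ pa x z := div_pos hpa' hmXa
      have hlog : Real.log (condZ pa x z) ≤ Real.log (margZ pn z) :=
        Real.log_le_log hcond (hle x z h)
      have hc : Real.log (condZ pa x z) =
          Real.log (pa (x, z)) - Real.log (margX pa x) := by
        unfold condZ; exact Real.log_div (ne_of_gt hpa') (ne_of_gt hmXa)
      have e1 : Real.log (pn (x, z) / pa (x, z)) =
          Real.log (pn (x, z)) - Real.log (pa (x, z)) :=
        Real.log_div (ne_of_gt h) (ne_of_gt hpa')
      have e2 : Real.log (pn (x, z) / (margX pn x * margZ pn z)) =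
          Real.log (pn (x, z)) - (Real.log (margX pn x) + Real.log (margZ pn z)) := by
        rw [Real.log_div (ne_of_gt h) (by positivity),
          Real.log_mul (ne_of_gt hmX) (ne_of_gt hmZ)]
      simp only
      rw [e1, e2]
      rw [hc] at hlog
      nlinarith [h.le]
    · have h0 : pn (x, z) = 0 := le_antisymm (not_lt.1 h) (hpn0 _)
      simp [h0]
  -- the X-marginal Gibbs inequality
  have gibbs : 0 ≤ ∑ x, margX pn x * (Real.log (margX pn x) - Real.log (margX pa x)) := by
    have term : ∀ x, margX pn x - margX pa x ≤
        margX pn x * (Real.log (margX pn x) - Real.log (margX pa x)) := by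
      intro x
      by_cases h : 0 < margX pn x
      · have hx : ∃ z, 0 < pn (x, z) := by
          by_contra hcon
          push_neg at hcon
          have : margX pn x = 0 := Finset.sum_eq_zero fun z _ =>
            le_antisymm (hcon z) (hpn0 (x, z))
          linarith
        obtain ⟨z, hz⟩ := hx
        have hmXa : 0 < margX pa x := lt_of_lt_of_le (hpos x z hz) (hmXpa x z)
        have hlt : Real.log (margX pa x / margX pn x) ≤ margX pa x / margX pn x - 1 :=
          Real.log_le_sub_one_of_pos (div_pos hmXa h)
        rw [Real.log_div (ne_of_gt hmXa) (ne_of_gt h)] at hlt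
        have hdiv : margX pn x * (margX pa x / margX pn x) = margX pa x := by
          field_simp
        nlinarith [h.le]
      · have h0 : margX pn x = 0 := le_antisymm (not_lt.1 h) (hmargXpn0 x)
        rw [h0]
        simp
        exact hmargXpa0 x
    calc (0 : ℝ) = ∑ x, (margX pn x - margX pa x) := by
          rw [Finset.sum_sub_distrib, hmargXpn1, hmargXpa1]; ring
      _ ≤ _ := Finset.sum_le_sum fun x _ => term x
  -- combine
  have hsum : ∑ ω : X × Z, pn ω * (Real.log (margX pn ω.1) - Real.log (margX pa ω.1)) =
      ∑ x, margX pn x * (Real.log (margX pn x) - Real.log (margX pa x)) := by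
    rw [Fintype.sum_prod_type]
    refine Finset.sum_congr rfl fun x _ => ?_
    exact (Finset.sum_mul univ (fun z => pn (x, z)) (Real.log (margX pn x) - Real.log (margX pa x))).symm
  have hKI : mutualInfo pn ≤ KL pn pa := by
    have h1 := Finset.sum_le_sum (s := (univ : Finset (X × Z))) fun ω _ => key ω
    rw [Finset.sum_sub_distrib, hsum] at h1
    have : 0 ≤ ∑ ω : X × Z, pn ω * Real.log (pn ω / pa ω) -
        ∑ ω : X × Z, pn ω * Real.log (pn ω / (margX pn ω.1 * margZ pn ω.2)) :=
      le_trans gibbs h1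
    unfold mutualInfo KL
    simp only at this ⊢
    linarith
  have : 0 ≤ β * entropy (margZ pn) := mul_nonneg hβ0 hH
  linarith
end
end

section
/- (Donsker–Varadhan lower bound, finite form.) For a finite type Ω, let μ and ν be probability mass functions on Ω with ν(ω) > 0 whenever μ(ω) > 0, and let f : Ω → ℝ be any function. Then KL[μ ‖ ν] ≥ Σ_ω μ(ω) · f(ω) − log( Σ_ω ν(ω) · exp(f(ω)) ). -/
open Finset Real MeasureTheory

noncomputable section

/-- Donsker–Varadhan lower bound (finite form):
`KL[μ ‖ ν] ≥ Σ_ω μ(ω) · f(ω) − log(Σ_ω ν(ω) · exp(f(ω)))`. -/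
theorem donsker_varadhan {Ω : Type*} [Fintype Ω]
    (μ ν : Ω → ℝ) (hμ : IsPmf μ) (hν : IsPmf ν)
    (hpos : ∀ ω, 0 < μ ω → 0 < ν ω) (f : Ω → ℝ) :
    KL μ ν ≥ ∑ ω, μ ω * f ω - Real.log (∑ ω, ν ω * Real.exp (f ω)) := by
  obtain ⟨hμ0, hμ1⟩ := hμ
  obtain ⟨hν0, hν1⟩ := hν
  set S : Finset Ω := Finset.univ.filter (fun ω => 0 < μ ω) with hS
  have hmemS : ∀ ω ∈ S, 0 < μ ω := by intro ω hω; exact (Finset.mem_filter.mp hω).2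
  have hμS : ∑ ω ∈ S, μ ω = 1 := by
    rw [← hμ1]
    apply Finset.sum_subset (Finset.subset_univ S)
    intro ω _ hω
    have := hμ0 ω
    by_contra h
    exact hω (Finset.mem_filter.mpr ⟨Finset.mem_univ ω, lt_of_le_of_ne this (Ne.symm h)⟩)
  -- Jensen: ∑_S μ ω * log (g ω) ≤ log (∑_S μ ω * g ω) where g ω = ν ω * exp (f ω) / μ ω
  set g : Ω → ℝ := fun ω => ν ω * Real.exp (f ω) / μ ω with hg
  have hgpos : ∀ ω ∈ S, 0 < g ω := by
    intro ω hω
    exact div_pos (mul_pos (hpos ω (hmemS ω hω)) (Real.exp_pos _)) (hmemS ω hω)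
  have jensen : ∑ ω ∈ S, μ ω * Real.log (g ω) ≤ Real.log (∑ ω ∈ S, μ ω * g ω) := by
    have := strictConcaveOn_log_Ioi.concaveOn.le_map_sum
      (t := S) (w := μ) (p := g) (fun i hi => (hmemS i hi).le) hμS
      (fun i hi => Set.mem_Ioi.mpr (hgpos i hi))
    simpa [smul_eq_mul] using this
  have hsum_eq : ∑ ω ∈ S, μ ω * g ω = ∑ ω ∈ S, ν ω * Real.exp (f ω) := by
    apply Finset.sum_congr rfl
    intro ω hω
    simp only [hg]
    field_simp [hg, (hmemS ω hω).ne']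
  have hSsum_pos : 0 < ∑ ω ∈ S, ν ω * Real.exp (f ω) := by
    have hne : S.Nonempty := by
      by_contra h
      rw [Finset.not_nonempty_iff_eq_empty] at h
      rw [h, Finset.sum_empty] at hμS
      norm_num at hμS
    obtain ⟨ω, hω⟩ := hne
    apply Finset.sum_pos'
    · intro i hi
      exact (mul_nonneg (hν0 i) (Real.exp_pos _).le)
    · exact ⟨ω, hω, mul_pos (hpos ω (hmemS ω hω)) (Real.exp_pos _)⟩
  have hmono : Real.log (∑ ω ∈ S, ν ω * Real.exp (f ω)) ≤
      Real.log (∑ ω, ν ω * Real.exp (f ω)) := by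
    apply Real.log_le_log hSsum_pos
    apply Finset.sum_le_sum_of_subset_of_nonneg (Finset.subset_univ S)
    intro i _ _
    exact mul_nonneg (hν0 i) (Real.exp_pos _).le
  -- rewrite LHS of jensen
  have hlog : ∀ ω ∈ S, μ ω * Real.log (g ω)
      = μ ω * f ω - μ ω * Real.log (μ ω / ν ω) := by
    intro ω hω
    have hμp := hmemS ω hω
    have hνp := hpos ω hμp
    rw [hg]
    rw [Real.log_div (mul_pos hνp (Real.exp_pos _)).ne' hμp.ne',
        Real.log_mul hνp.ne' (Real.exp_pos _).ne', Real.log_exp,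
        Real.log_div hμp.ne' hνp.ne']
    ring
  have hKL : KL μ ν = ∑ ω ∈ S, μ ω * Real.log (μ ω / ν ω) := by
    rw [KL]
    symm
    apply Finset.sum_subset (Finset.subset_univ S)
    intro ω _ hω
    have hz : μ ω = 0 := by
      by_contra h
      exact hω (Finset.mem_filter.mpr ⟨Finset.mem_univ ω,
        lt_of_le_of_ne (hμ0 ω) (Ne.symm h)⟩)
    simp [hz]
  have hf : ∑ ω, μ ω * f ω = ∑ ω ∈ S, μ ω * f ω := by
    symm
    apply Finset.sum_subset (Finset.subset_univ S)
    intro ω _ hω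
    have hz : μ ω = 0 := by
      by_contra h
      exact hω (Finset.mem_filter.mpr ⟨Finset.mem_univ ω,
        lt_of_le_of_ne (hμ0 ω) (Ne.symm h)⟩)
    simp [hz]
  rw [Finset.sum_congr rfl hlog, Finset.sum_sub_distrib] at jensen
  rw [hsum_eq] at jensen
  rw [ge_iff_le, hKL, hf]
  linarith
end
end

section
/- (Donsker–Varadhan bound on mutual information, finite form.) For finite types X and Z, let p be a joint probability mass function on X × Z with marginals p_X and p_Z, and let f : X × Z → ℝ be any function (a critic). Then the mutual information satisfies I_p(X;Z) ≥ Σ_{(x,z)} p(x,z) · f(x,z) − log( Σ_{(x,z)} p_X(x) · p_Z(z) · exp(f(x,z)) ). -/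
open Finset Real MeasureTheory

noncomputable section

/-- Donsker–Varadhan bound on mutual information (finite form): for any critic `f`,
`I(X;Z) ≥ E_p[f] − log E_{p_X ⊗ p_Z}[exp f]`. -/
theorem donsker_varadhan_mutualInfo {X Z : Type*} [Fintype X] [Fintype Z]
    (p : X × Z → ℝ) (hp : IsPmf p) (f : X × Z → ℝ) :
    mutualInfo p ≥
      ∑ xz, p xz * f xz -
        Real.log (∑ xz : X × Z, margX p xz.1 * margZ p xz.2 * Real.exp (f xz)) := by
  obtain ⟨hp0, hp1⟩ := hp
  set q : X × Z → ℝ := fun xz => margX p xz.1 * margZ p xz.2 with hq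
  have hq0 : ∀ xz, 0 ≤ q xz := fun xz =>
    mul_nonneg (Finset.sum_nonneg fun _ _ => hp0 _) (Finset.sum_nonneg fun _ _ => hp0 _)
  have hqsum : ∑ xz : X × Z, q xz = 1 := by
    have hx : ∑ x, margX p x = 1 := by
      rw [← hp1, Fintype.sum_prod_type]; rfl
    have hz : ∑ z, margZ p z = 1 := by
      calc ∑ z, margZ p z = ∑ z, ∑ x, p (x, z) := rfl
        _ = ∑ x, ∑ z, p (x, z) := Finset.sum_comm
        _ = 1 := by rw [← Fintype.sum_prod_type]; exact hp1
    calc ∑ xz : X × Z, q xz = (∑ x, margX p x) * (∑ z, margZ p z) := by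
          rw [Finset.sum_mul_sum, Fintype.sum_prod_type]
      _ = 1 := by rw [hx, hz, mul_one]
  set S : ℝ := ∑ xz : X × Z, q xz * Real.exp (f xz) with hS
  have hex : ∃ xz : X × Z, 0 < q xz := by
    by_contra h
    push_neg at h
    have : ∑ xz : X × Z, q xz ≤ 0 := Finset.sum_nonpos fun xz _ => h xz
    linarith
  have hS0 : 0 < S := by
    refine Finset.sum_pos' (fun xz _ => mul_nonneg (hq0 xz) (Real.exp_pos _).le)
      ⟨hex.choose, Finset.mem_univ _, mul_pos hex.choose_spec (Real.exp_pos _)⟩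
  have key : ∀ xz : X × Z,
      p xz - q xz * Real.exp (f xz) / S ≤
      p xz * Real.log (p xz / q xz) - (p xz * f xz - p xz * Real.log S) := by
    intro xz
    rcases eq_or_lt_of_le (hp0 xz) with h0 | hpos
    · have := hq0 xz
      have hnn : 0 ≤ q xz * Real.exp (f xz) / S := by positivity
      simp [← h0]
      linarith
    · have hqx : p xz ≤ margX p xz.1 := by
        have := Finset.single_le_sum (f := fun z => p (xz.1, z)) (fun z _ => hp0 _)
          (Finset.mem_univ xz.2)
        simpa [margX] using this
      have hqz : p xz ≤ margZ p xz.2 := by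
        have := Finset.single_le_sum (f := fun x => p (x, xz.2)) (fun x _ => hp0 _)
          (Finset.mem_univ xz.1)
        simpa [margZ] using this
      have hqpos : 0 < q xz := mul_pos (lt_of_lt_of_le hpos hqx) (lt_of_lt_of_le hpos hqz)
      set g : ℝ := q xz * Real.exp (f xz) / S with hg
      have hgpos : 0 < g := by positivity
      have hlogg : Real.log g = Real.log (q xz) + f xz - Real.log S := by
        rw [hg, Real.log_div (by positivity) hS0.ne', Real.log_mul hqpos.ne' (Real.exp_ne_zero _),
          Real.log_exp]
      have hlog : Real.log (g / p xz) ≤ g / p xz - 1 :=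
        Real.log_le_sub_one_of_pos (by positivity)
      have hld : Real.log (g / p xz) = Real.log g - Real.log (p xz) :=
        Real.log_div hgpos.ne' hpos.ne'
      have hlpq : Real.log (p xz / q xz) = Real.log (p xz) - Real.log (q xz) :=
        Real.log_div hpos.ne' hqpos.ne'
      rw [hlpq]
      have h2 : Real.log (q xz) + f xz - Real.log S - Real.log (p xz) ≤ g / p xz - 1 := by
        rw [← hlogg, ← hld]; exact hlog
      have h3 := mul_le_mul_of_nonneg_left h2 hpos.le
      have hgp : p xz * (g / p xz) = g := by field_simp
      nlinarith [h3, hgp]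
  have hsum : ∑ xz : X × Z, (p xz - q xz * Real.exp (f xz) / S) ≤
      ∑ xz : X × Z, (p xz * Real.log (p xz / q xz) - (p xz * f xz - p xz * Real.log S)) :=
    Finset.sum_le_sum fun xz _ => key xz
  have hrhs : ∑ xz : X × Z, (p xz - q xz * Real.exp (f xz) / S) = 0 := by
    rw [Finset.sum_sub_distrib, hp1, ← Finset.sum_div, ← hS, div_self hS0.ne']
    ring
  have hlhs : ∑ xz : X × Z, (p xz * Real.log (p xz / q xz) - (p xz * f xz - p xz * Real.log S))
      = mutualInfo p - (∑ xz, p xz * f xz) + Real.log S := by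
    rw [Finset.sum_sub_distrib, Finset.sum_sub_distrib, ← Finset.sum_mul, hp1, one_mul]
    have : mutualInfo p = ∑ xz : X × Z, p xz * Real.log (p xz / q xz) := rfl
    rw [this]; ring
  rw [hrhs, hlhs] at hsum
  linarith
end
end

section
/- (InfoNCE / Contrastive Predictive Coding lower bound, finite form.) For finite types X and Z, let p be a joint probability mass function on X × Z, let K be a positive natural number, and let f : X × Z → ℝ be any function (a critic). Let the K pairs ((x_1,z_1), …, (x_K,z_K)) be drawn i.i.d. from p, i.e., distributed according to the K-fold product pmf p^{⊗K} on (X × Z)^K. Then the mutual information satisfies I_p(X;Z) ≥ E_{p^{⊗K}}[ (1/K) · Σ_{i=1}^K log( exp(f(x_i,z_i)) / ( (1/K) · Σ_{j=1}^K exp(f(x_i,z_j)) ) ) ]. -/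
open Finset Real MeasureTheory

noncomputable section

/-- The K-fold product pmf on tuples of pairs. -/
def prodPmf {X Z : Type*} [Fintype X] [Fintype Z] (p : X × Z → ℝ) (K : ℕ)
    (t : Fin K → X × Z) : ℝ :=
  ∏ i, p (t i)

section Aux
set_option linter.unusedSectionVars false
variable {X Z : Type*} [Fintype X] [Fintype Z]

lemma sum_fn_prod {Ω : Type*} [Fintype Ω] {K : ℕ} (g : Fin K → Ω → ℝ) :
    ∑ t : Fin K → Ω, ∏ i, g i (t i) = ∏ i, ∑ ω, g i ω := by
  rw [Finset.prod_univ_sum]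
  rw [Fintype.piFinset_univ]

lemma prod_apply_ite {K : ℕ} (i : Fin K) (c d : Fin K → ℝ) :
    ∏ j, (if j = i then c j else d j) = c i * ∏ j ∈ Finset.univ.erase i, d j := by
  rw [← Finset.mul_prod_erase Finset.univ _ (Finset.mem_univ i)]
  simp only [if_pos rfl]
  congr 1
  exact Finset.prod_congr rfl fun j hj => if_neg (Finset.ne_of_mem_erase hj)

lemma sum_if_const {Ω : Type*} [Fintype Ω] (c : Prop) [Decidable c] (A B : Ω → ℝ) :
    ∑ x, (if c then A x else B x) = if c then ∑ x, A x else ∑ x, B x := by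
  split_ifs <;> rfl

lemma sum_margX (p : X × Z → ℝ) (hp : IsPmf p) : ∑ x, margX p x = 1 := by
  simpa [margX, Fintype.sum_prod_type] using hp.2

lemma sum_margZ (p : X × Z → ℝ) (hp : IsPmf p) : ∑ z, margZ p z = 1 := by
  have h2 := hp.2
  rw [Fintype.sum_prod_type] at h2
  rw [show ∑ z, margZ p z = ∑ z : Z, ∑ x : X, p (x, z) from rfl, Finset.sum_comm]
  exact h2

lemma sum_prodPmf (p : X × Z → ℝ) (hp : IsPmf p) (K : ℕ) :
    ∑ t : Fin K → X × Z, prodPmf p K t = 1 := by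
  have h := sum_fn_prod (K := K) (fun _ : Fin K => p)
  simpa [prodPmf, hp.2] using h

lemma marg_lemma (p : X × Z → ℝ) (hp : IsPmf p) {K : ℕ} (i : Fin K) (h : X × Z → ℝ) :
    ∑ t : Fin K → X × Z, prodPmf p K t * h (t i) = ∑ ω, p ω * h ω := by
  have e : ∀ t : Fin K → X × Z, prodPmf p K t * h (t i)
      = ∏ j, (if j = i then p (t j) * h (t j) else p (t j)) := by
    intro t
    rw [prod_apply_ite i (fun j => p (t j) * h (t j)) (fun j => p (t j))]
    unfold prodPmf
    rw [← Finset.mul_prod_erase Finset.univ (fun j => p (t j)) (Finset.mem_univ i)]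
    ring
  have hs : ∑ t : Fin K → X × Z, ∏ j, (if j = i then p (t j) * h (t j) else p (t j))
      = ∏ j, ∑ ω, (if j = i then p ω * h ω else p ω) :=
    sum_fn_prod (fun j ω => if j = i then p ω * h ω else p ω)
  rw [Finset.sum_congr rfl (fun t _ => e t), hs]
  have e2 : ∀ j : Fin K, ∑ ω, (if j = i then p ω * h ω else p ω)
      = if j = i then ∑ ω, p ω * h ω else 1 := by
    intro j
    rw [sum_if_const]
    split_ifs <;> simp [hp.2]
  rw [Finset.prod_congr rfl (fun j _ => e2 j), prod_apply_ite]
  simp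

lemma sum_pair_fn {K : ℕ} (F : (Fin K → X × Z) → ℝ) :
    ∑ t, F t = ∑ u : Fin K → X, ∑ v : Fin K → Z, F (fun l => (u l, v l)) := by
  rw [← Equiv.sum_comp (Equiv.arrowProdEquivProdArrow (Fin K) (fun _ => X) (fun _ => Z)).symm F,
    Fintype.sum_prod_type]
  rfl


lemma swap_sym {K : ℕ} (b : Z → ℝ) (f : X × Z → ℝ) (x : X) (i j : Fin K) :
    ∑ v : Fin K → Z, (∏ l, b (v l)) *
      (Real.exp (f (x, v j)) / ((1/(K:ℝ)) * ∑ l, Real.exp (f (x, v l))))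
    = ∑ v : Fin K → Z, (∏ l, b (v l)) *
      (Real.exp (f (x, v i)) / ((1/(K:ℝ)) * ∑ l, Real.exp (f (x, v l)))) := by
  have key := Equiv.sum_comp (Equiv.arrowCongr (Equiv.swap i j) (Equiv.refl Z))
    (fun v : Fin K → Z => (∏ l, b (v l)) *
      (Real.exp (f (x, v i)) / ((1/(K:ℝ)) * ∑ l, Real.exp (f (x, v l)))))
  rw [← key]
  apply Finset.sum_congr rfl
  intro v _
  have hv : ∀ l, (Equiv.arrowCongr (Equiv.swap i j) (Equiv.refl Z)) v l
      = v (Equiv.swap i j l) := by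
    intro l
    simp [Equiv.arrowCongr_apply, Equiv.symm_swap]
  simp only [hv]
  rw [Equiv.prod_comp (Equiv.swap i j) (fun l => b (v l)),
    Equiv.sum_comp (Equiv.swap i j) (fun l => Real.exp (f (x, v l))),
    Equiv.swap_apply_left]

lemma exp_ratio_one {K : ℕ} (hK : 0 < K) (b : Z → ℝ) (hb1 : ∑ z, b z = 1)
    (f : X × Z → ℝ) (x : X) (i : Fin K) :
    ∑ v : Fin K → Z, (∏ l, b (v l)) *
      (Real.exp (f (x, v i)) / ((1/(K:ℝ)) * ∑ l, Real.exp (f (x, v l)))) = 1 := by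
  have hKne : (K:ℝ) ≠ 0 := Nat.cast_ne_zero.mpr hK.ne'
  have hvb : ∑ v : Fin K → Z, ∏ l, b (v l) = 1 := by
    have := sum_fn_prod (K := K) (fun _ : Fin K => b)
    simpa [hb1] using this
  have hsum : (K:ℝ) * (∑ v : Fin K → Z, (∏ l, b (v l)) *
      (Real.exp (f (x, v i)) / ((1/(K:ℝ)) * ∑ l, Real.exp (f (x, v l))))) = (K:ℝ) := by
    calc (K:ℝ) * _ = ∑ j : Fin K, ∑ v : Fin K → Z, (∏ l, b (v l)) *
          (Real.exp (f (x, v j)) / ((1/(K:ℝ)) * ∑ l, Real.exp (f (x, v l)))) := by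
          rw [Finset.sum_congr rfl (fun j _ => swap_sym b f x i j)]
          simp [Finset.sum_const, Finset.card_univ, mul_comm]
      _ = ∑ v : Fin K → Z, ∑ j : Fin K, (∏ l, b (v l)) *
          (Real.exp (f (x, v j)) / ((1/(K:ℝ)) * ∑ l, Real.exp (f (x, v l)))) :=
          Finset.sum_comm
      _ = ∑ v : Fin K → Z, (∏ l, b (v l)) * (K:ℝ) := by
          apply Finset.sum_congr rfl
          intro v _
          rw [← Finset.mul_sum, ← Finset.sum_div]
          have hpos : 0 < ∑ l, Real.exp (f (x, v l)) :=
            Finset.sum_pos (fun l _ => Real.exp_pos _)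
              (by
                have : Nonempty (Fin K) := Fin.pos_iff_nonempty.mp hK
                exact Finset.univ_nonempty)
          congr 1
          field_simp
      _ = (K:ℝ) := by rw [← Finset.sum_mul, hvb, one_mul]
  exact mul_left_cancel₀ hKne (hsum.trans (mul_one (K:ℝ)).symm)

lemma sum_u_eq_one (p : X × Z → ℝ) (hp : IsPmf p) {K : ℕ} (hK : 0 < K)
    (f : X × Z → ℝ) (i : Fin K) :
    ∑ t : Fin K → X × Z, (∏ l ∈ Finset.univ.erase i, p (t l)) *
      (margX p (t i).1 * margZ p (t i).2 *
        (Real.exp (f (t i)) / ((1/(K:ℝ)) * ∑ j, Real.exp (f ((t i).1, (t j).2))))) = 1 := by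
  rw [sum_pair_fn (fun t : Fin K → X × Z => (∏ l ∈ Finset.univ.erase i, p (t l)) *
      (margX p (t i).1 * margZ p (t i).2 *
        (Real.exp (f (t i)) / ((1/(K:ℝ)) * ∑ j, Real.exp (f ((t i).1, (t j).2))))))]
  rw [Finset.sum_comm]
  calc ∑ v : Fin K → Z, ∑ u : Fin K → X,
        (∏ l ∈ Finset.univ.erase i, p (u l, v l)) *
          (margX p (u i) * margZ p (v i) *
            (Real.exp (f (u i, v i)) / ((1/(K:ℝ)) * ∑ j, Real.exp (f (u i, v j)))))
      = ∑ v : Fin K → Z, margZ p (v i) *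
          ((∑ x, margX p x *
            (Real.exp (f (x, v i)) / ((1/(K:ℝ)) * ∑ j, Real.exp (f (x, v j))))) *
            ∏ l ∈ Finset.univ.erase i, margZ p (v l)) := by
        apply Finset.sum_congr rfl
        intro v _
        have e : ∀ u : Fin K → X,
            (∏ l ∈ Finset.univ.erase i, p (u l, v l)) *
              (margX p (u i) * margZ p (v i) *
                (Real.exp (f (u i, v i)) / ((1/(K:ℝ)) * ∑ j, Real.exp (f (u i, v j)))))
            = margZ p (v i) * ∏ l, (if l = i then
                margX p (u l) *
                  (Real.exp (f (u l, v i)) / ((1/(K:ℝ)) * ∑ j, Real.exp (f (u l, v j))))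
                else p (u l, v l)) := by
          intro u
          rw [prod_apply_ite i
            (fun l => margX p (u l) *
              (Real.exp (f (u l, v i)) / ((1/(K:ℝ)) * ∑ j, Real.exp (f (u l, v j)))))
            (fun l => p (u l, v l))]
          ring
        rw [Finset.sum_congr rfl (fun u _ => e u), ← Finset.mul_sum]
        have hs : ∑ u : Fin K → X, ∏ l, (if l = i then
              margX p (u l) *
                (Real.exp (f (u l, v i)) / ((1/(K:ℝ)) * ∑ j, Real.exp (f (u l, v j))))
              else p (u l, v l))
            = ∏ l, ∑ x, (if l = i then
              margX p x *
                (Real.exp (f (x, v i)) / ((1/(K:ℝ)) * ∑ j, Real.exp (f (x, v j))))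
              else p (x, v l)) :=
          sum_fn_prod (fun l x => if l = i then
              margX p x *
                (Real.exp (f (x, v i)) / ((1/(K:ℝ)) * ∑ j, Real.exp (f (x, v j))))
              else p (x, v l))
        rw [hs]
        have e2 : ∀ l : Fin K, (∑ x, (if l = i then
              margX p x *
                (Real.exp (f (x, v i)) / ((1/(K:ℝ)) * ∑ j, Real.exp (f (x, v j))))
              else p (x, v l)))
            = if l = i then
              ∑ x, margX p x *
                (Real.exp (f (x, v i)) / ((1/(K:ℝ)) * ∑ j, Real.exp (f (x, v j))))
              else margZ p (v l) := by
          intro l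
          rw [sum_if_const]
          split_ifs <;> rfl
        rw [Finset.prod_congr rfl (fun l _ => e2 l), prod_apply_ite]
    _ = ∑ v : Fin K → Z, ∑ x, margX p x * ((∏ l, margZ p (v l)) *
          (Real.exp (f (x, v i)) / ((1/(K:ℝ)) * ∑ j, Real.exp (f (x, v j))))) := by
        apply Finset.sum_congr rfl
        intro v _
        rw [← Finset.mul_prod_erase Finset.univ (fun l => margZ p (v l)) (Finset.mem_univ i)]
        simp only [Finset.sum_mul, Finset.mul_sum]
        apply Finset.sum_congr rfl
        intro x _
        ring
    _ = ∑ x, margX p x * ∑ v : Fin K → Z, (∏ l, margZ p (v l)) *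
          (Real.exp (f (x, v i)) / ((1/(K:ℝ)) * ∑ j, Real.exp (f (x, v j)))) := by
        rw [Finset.sum_comm]
        exact Finset.sum_congr rfl fun x _ => (Finset.mul_sum _ _ _).symm
    _ = 1 := by
        rw [Finset.sum_congr rfl (fun x _ => by
          rw [exp_ratio_one hK (margZ p) (sum_margZ p hp) f x i]),
          ]
        simp [sum_margX p hp]

lemma margX_nonneg (p : X × Z → ℝ) (hp : IsPmf p) (x : X) : 0 ≤ margX p x :=
  Finset.sum_nonneg fun z _ => hp.1 _
lemma margZ_nonneg (p : X × Z → ℝ) (hp : IsPmf p) (z : Z) : 0 ≤ margZ p z :=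
  Finset.sum_nonneg fun x _ => hp.1 _

lemma T_le_one (p : X × Z → ℝ) (hp : IsPmf p) {K : ℕ} (hK : 0 < K)
    (f : X × Z → ℝ) (i : Fin K) :
    ∑ t : Fin K → X × Z, prodPmf p K t *
      (margX p (t i).1 * margZ p (t i).2 / p (t i) *
        (Real.exp (f (t i)) / ((1/(K:ℝ)) * ∑ j, Real.exp (f ((t i).1, (t j).2))))) ≤ 1 := by
  refine le_trans (Finset.sum_le_sum ?_) (le_of_eq (sum_u_eq_one p hp hK f i))
  intro t _
  by_cases h0 : p (t i) = 0
  · rw [h0, div_zero, zero_mul, mul_zero]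
    have hE : 0 ≤ Real.exp (f (t i)) / ((1/(K:ℝ)) * ∑ j, Real.exp (f ((t i).1, (t j).2))) := by
      apply div_nonneg (Real.exp_nonneg _)
      apply mul_nonneg (by positivity)
      exact Finset.sum_nonneg fun j _ => Real.exp_nonneg _
    apply mul_nonneg (Finset.prod_nonneg fun l _ => hp.1 _)
    exact mul_nonneg (mul_nonneg (margX_nonneg p hp _) (margZ_nonneg p hp _)) hE
  · apply le_of_eq
    have hw : prodPmf p K t = p (t i) * ∏ l ∈ Finset.univ.erase i, p (t l) :=
      (Finset.mul_prod_erase Finset.univ (fun l => p (t l)) (Finset.mem_univ i)).symm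
    have key : p (t i) * (margX p (t i).1 * margZ p (t i).2 / p (t i))
        = margX p (t i).1 * margZ p (t i).2 := by
      rw [mul_comm, div_mul_cancel₀ _ h0]
    rw [hw]
    linear_combination (∏ l ∈ Finset.univ.erase i, p (t l)) *
      (Real.exp (f (t i)) / ((1/(K:ℝ)) * ∑ j, Real.exp (f ((t i).1, (t j).2)))) * key

lemma core (p : X × Z → ℝ) (hp : IsPmf p) {K : ℕ} (hK : 0 < K)
    (f : X × Z → ℝ) (i : Fin K) :
    ∑ t : Fin K → X × Z, prodPmf p K t *
      Real.log (Real.exp (f (t i)) / ((1/(K:ℝ)) * ∑ j, Real.exp (f ((t i).1, (t j).2))))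
    ≤ mutualInfo p := by
  have : Nonempty (Fin K) := Fin.pos_iff_nonempty.mp hK
  have hMI : mutualInfo p = ∑ t : Fin K → X × Z, prodPmf p K t *
      Real.log (p (t i) / (margX p (t i).1 * margZ p (t i).2)) := by
    rw [marg_lemma p hp i (fun ω => Real.log (p ω / (margX p ω.1 * margZ p ω.2)))]
    rfl
  have key : ∀ t ∈ (Finset.univ : Finset (Fin K → X × Z)),
      prodPmf p K t *
        Real.log (Real.exp (f (t i)) / ((1/(K:ℝ)) * ∑ j, Real.exp (f ((t i).1, (t j).2))))
      ≤ prodPmf p K t * Real.log (p (t i) / (margX p (t i).1 * margZ p (t i).2))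
        - (prodPmf p K t - prodPmf p K t *
          (margX p (t i).1 * margZ p (t i).2 / p (t i) *
            (Real.exp (f (t i)) / ((1/(K:ℝ)) * ∑ j, Real.exp (f ((t i).1, (t j).2)))))) := by
    intro t _
    by_cases h0 : prodPmf p K t = 0
    · simp [h0]
    · have hwpos : 0 < prodPmf p K t :=
        lt_of_le_of_ne (Finset.prod_nonneg fun l _ => hp.1 _) (Ne.symm h0)
      have hpl : ∀ l, 0 < p (t l) := by
        intro l
        have hne := Finset.prod_ne_zero_iff.mp h0 l (Finset.mem_univ l)
        exact lt_of_le_of_ne (hp.1 _) (Ne.symm hne)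
      have hPi : 0 < p (t i) := hpl i
      have hmX : 0 < margX p (t i).1 := by
        calc (0:ℝ) < p (t i) := hPi
          _ = p ((t i).1, (t i).2) := by simp
          _ ≤ margX p (t i).1 :=
            Finset.single_le_sum (fun z _ => hp.1 ((t i).1, z)) (Finset.mem_univ (t i).2)
      have hmZ : 0 < margZ p (t i).2 := by
        calc (0:ℝ) < p (t i) := hPi
          _ = p ((t i).1, (t i).2) := by simp
          _ ≤ margZ p (t i).2 :=
            Finset.single_le_sum (fun x _ => hp.1 (x, (t i).2)) (Finset.mem_univ (t i).1)
      set P := p (t i) with hP_def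
      set A := margX p (t i).1 * margZ p (t i).2 with hA_def
      set E := Real.exp (f (t i)) with hE_def
      set S := (1/(K:ℝ)) * ∑ j, Real.exp (f ((t i).1, (t j).2)) with hS_def
      have hApos : 0 < A := mul_pos hmX hmZ
      have hEpos : 0 < E := Real.exp_pos _
      have hSpos : 0 < S := by
        apply mul_pos (by positivity)
        exact Finset.sum_pos (fun j _ => Real.exp_pos _) Finset.univ_nonempty
      have hD : 0 < A / P * (E / S) := mul_pos (div_pos hApos hPi) (div_pos hEpos hSpos)
      have hlog := Real.log_le_sub_one_of_pos hD
      have hsplit : Real.log (A / P * (E / S)) = Real.log (E / S) - Real.log (P / A) := by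
        rw [Real.log_mul (div_pos hApos hPi).ne' (div_pos hEpos hSpos).ne',
          Real.log_div hApos.ne' hPi.ne', Real.log_div hPi.ne' hApos.ne']
        ring
      have h2 : Real.log (E / S) - Real.log (P / A) ≤ A / P * (E / S) - 1 := by
        rw [← hsplit]; exact hlog
      have h3 := mul_le_mul_of_nonneg_left h2 hwpos.le
      rw [mul_sub, mul_sub] at h3
      linarith
  calc ∑ t : Fin K → X × Z, prodPmf p K t *
        Real.log (Real.exp (f (t i)) / ((1/(K:ℝ)) * ∑ j, Real.exp (f ((t i).1, (t j).2))))
      ≤ ∑ t : Fin K → X × Z, (prodPmf p K t *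
          Real.log (p (t i) / (margX p (t i).1 * margZ p (t i).2))
        - (prodPmf p K t - prodPmf p K t *
          (margX p (t i).1 * margZ p (t i).2 / p (t i) *
            (Real.exp (f (t i)) / ((1/(K:ℝ)) * ∑ j, Real.exp (f ((t i).1, (t j).2))))))) :=
        Finset.sum_le_sum key
    _ = (∑ t : Fin K → X × Z, prodPmf p K t *
          Real.log (p (t i) / (margX p (t i).1 * margZ p (t i).2)))
        - ((∑ t : Fin K → X × Z, prodPmf p K t)
          - ∑ t : Fin K → X × Z, prodPmf p K t *
            (margX p (t i).1 * margZ p (t i).2 / p (t i) *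
              (Real.exp (f (t i)) / ((1/(K:ℝ)) * ∑ j, Real.exp (f ((t i).1, (t j).2)))))) := by
        rw [Finset.sum_sub_distrib, Finset.sum_sub_distrib]
    _ ≤ mutualInfo p := by
        have h1 := sum_prodPmf p hp K
        have h2 := T_le_one p hp hK f i
        rw [hMI]
        linarith

end Aux

/-- InfoNCE / Contrastive Predictive Coding lower bound (finite form): for any critic
`f` and `K` i.i.d. pairs drawn from `p`,
`I(X;Z) ≥ E_{p^{⊗K}}[(1/K) Σ_i log(exp f(x_i,z_i) / ((1/K) Σ_j exp f(x_i,z_j)))]`. -/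
theorem infoNCE_lower_bound {X Z : Type*} [Fintype X] [Fintype Z]
    (p : X × Z → ℝ) (hp : IsPmf p) (K : ℕ) (hK : 0 < K) (f : X × Z → ℝ) :
    mutualInfo p ≥
      ∑ t : Fin K → X × Z, prodPmf p K t *
        ((1 / (K : ℝ)) * ∑ i, Real.log
          (Real.exp (f (t i)) /
            ((1 / (K : ℝ)) * ∑ j, Real.exp (f ((t i).1, (t j).2))))) := by
  rw [ge_iff_le]
  have hKne : (K:ℝ) ≠ 0 := Nat.cast_ne_zero.mpr hK.ne'
  calc ∑ t : Fin K → X × Z, prodPmf p K t *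
        ((1 / (K : ℝ)) * ∑ i, Real.log
          (Real.exp (f (t i)) /
            ((1 / (K : ℝ)) * ∑ j, Real.exp (f ((t i).1, (t j).2)))))
      = ∑ i : Fin K, ∑ t : Fin K → X × Z, prodPmf p K t *
          ((1 / (K : ℝ)) * Real.log
            (Real.exp (f (t i)) /
              ((1 / (K : ℝ)) * ∑ j, Real.exp (f ((t i).1, (t j).2))))) := by
        simp only [Finset.mul_sum]
        exact Finset.sum_comm
    _ ≤ ∑ i : Fin K, (1 / (K : ℝ)) * mutualInfo p := by
        apply Finset.sum_le_sum
        intro i _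
        have : ∑ t : Fin K → X × Z, prodPmf p K t *
            ((1 / (K : ℝ)) * Real.log
              (Real.exp (f (t i)) /
                ((1 / (K : ℝ)) * ∑ j, Real.exp (f ((t i).1, (t j).2)))))
            = (1 / (K : ℝ)) * ∑ t : Fin K → X × Z, prodPmf p K t *
              Real.log (Real.exp (f (t i)) /
                ((1 / (K : ℝ)) * ∑ j, Real.exp (f ((t i).1, (t j).2)))) := by
          rw [Finset.mul_sum]
          exact Finset.sum_congr rfl fun t _ => by ring
        rw [this]
        apply mul_le_mul_of_nonneg_left (core p hp hK f i) (by positivity)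
    _ = mutualInfo p := by
        rw [Finset.sum_const, Finset.card_univ, Fintype.card_fin, nsmul_eq_mul]
        field_simp
end
end
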